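/- A triple of real numbers (x, y, z) with 0 < x, y, z ≤ π arises as the pairwise spherical distances d(p,q), d(q,r), d(r,p) of three points p, q, r on the unit two-sphere if and only if it satisfies the spherical triangle inequalities: x + y + z ≤ 2π, x ≤ y + z, y ≤ z + x, and z ≤ x + y. -/

import Mathlib

open scoped RealInnerProductSpace

noncomputable def sdist (u v : EuclideanSpace ℝ (Fin 3)) : ℝ :=
  Real.arccos ⟪u, v⟫

def unitSphere : Set (EuclideanSpace ℝ (Fin 3)) :=
  Metric.sphere (0 : EuclideanSpace ℝ (Fin 3)) 1

private lemma aux1 {x y z : ℝ} (hz0 : 0 ≤ z) (h1 : z ≤ x + y) (h2 : x + y + z ≤ 2 * Real.pi) :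
    Real.cos (x + y) ≤ Real.cos z := by
  rcases le_or_gt (x + y) Real.pi with h | h
  · exact Real.cos_le_cos_of_nonneg_of_le_pi hz0 h h1
  · rw [← Real.cos_two_pi_sub (x + y)]
    exact Real.cos_le_cos_of_nonneg_of_le_pi hz0 (by linarith) (by linarith)

private lemma aux1' {x y z : ℝ} (hx0 : 0 ≤ x) (hy0 : 0 ≤ y) (hz0 : 0 ≤ z)
    (hx : x ≤ Real.pi) (hy : y ≤ Real.pi) (hz : z ≤ Real.pi)
    (h : Real.cos (x + y) ≤ Real.cos z) : z ≤ x + y ∧ x + y + z ≤ 2 * Real.pi := by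
  constructor
  · rcases le_or_gt (x + y) Real.pi with h' | h'
    · by_contra hc
      push_neg at hc
      have := Real.strictAntiOn_cos ⟨by linarith, h'⟩ ⟨hz0, hz⟩ hc
      linarith
    · linarith
  · rcases le_or_gt (x + y) Real.pi with h' | h'
    · linarith
    · rw [← Real.cos_two_pi_sub (x + y)] at h
      by_contra hc
      push_neg at hc
      have : Real.cos z < Real.cos (2 * Real.pi - (x + y)) :=
        Real.strictAntiOn_cos ⟨by linarith, by linarith⟩ ⟨hz0, hz⟩ (by linarith)
      linarith

private lemma aux2 {x y z : ℝ} (hz : z ≤ Real.pi) (h1 : x ≤ y + z) (h2 : y ≤ x + z) :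
    Real.cos z ≤ Real.cos (x - y) := by
  rw [← Real.cos_abs (x - y)]
  exact Real.cos_le_cos_of_nonneg_of_le_pi (abs_nonneg _) hz
    (abs_le.2 ⟨by linarith, by linarith⟩)

private lemma aux2' {x y z : ℝ} (hz0 : 0 ≤ z) (hz : z ≤ Real.pi) (hxy : |x - y| ≤ Real.pi)
    (h : Real.cos z ≤ Real.cos (x - y)) : x ≤ y + z ∧ y ≤ x + z := by
  rw [← Real.cos_abs (x - y)] at h
  have habs : |x - y| ≤ z := by
    by_contra hc
    push_neg at hc
    have := Real.strictAntiOn_cos ⟨hz0, hz⟩ ⟨abs_nonneg _, hxy⟩ hc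
    linarith
  obtain ⟨h1, h2⟩ := abs_le.1 habs
  constructor <;> linarith

/-- Gram condition via Cauchy–Schwarz on the projections of `p` and `r` away from `q`. -/
private lemma gram {p q r : EuclideanSpace ℝ (Fin 3)} (hp : ‖p‖ = 1) (hq : ‖q‖ = 1)
    (hr : ‖r‖ = 1) :
    (⟪r, p⟫ - ⟪p, q⟫ * ⟪q, r⟫) ^ 2 ≤ (1 - ⟪p, q⟫ ^ 2) * (1 - ⟪q, r⟫ ^ 2) := by
  have hpp : ⟪p, p⟫ = 1 := by rw [real_inner_self_eq_norm_sq, hp]; norm_num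
  have hqq : ⟪q, q⟫ = 1 := by rw [real_inner_self_eq_norm_sq, hq]; norm_num
  have hrr : ⟪r, r⟫ = 1 := by rw [real_inner_self_eq_norm_sq, hr]; norm_num
  have hcs := real_inner_mul_inner_self_le (p - ⟪p, q⟫ • q) (r - ⟪q, r⟫ • q)
  simp only [inner_sub_left, inner_sub_right, real_inner_smul_left, real_inner_smul_right,
    hpp, hqq, hrr] at hcs
  have h1 : ⟪q, p⟫ = ⟪p, q⟫ := real_inner_comm p q
  have h2 : ⟪r, q⟫ = ⟪q, r⟫ := real_inner_comm q r
  have h3 : ⟪p, r⟫ = ⟪r, p⟫ := real_inner_comm r p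
  rw [h1, h2, h3] at hcs
  nlinarith [hcs]

set_option maxHeartbeats 1000000 in
theorem stmt_0 (x y z : ℝ) (hx : 0 < x) (hy : 0 < y) (hz : 0 < z)
    (hx' : x ≤ Real.pi) (hy' : y ≤ Real.pi) (hz' : z ≤ Real.pi) :
    (∃ p q r : EuclideanSpace ℝ (Fin 3), p ∈ unitSphere ∧ q ∈ unitSphere ∧ r ∈ unitSphere ∧
      sdist p q = x ∧ sdist q r = y ∧ sdist r p = z) ↔
    (x + y + z ≤ 2 * Real.pi ∧ x ≤ y + z ∧ y ≤ z + x ∧ z ≤ x + y) := by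
  constructor
  · rintro ⟨p, q, r, hp, hq, hr, hpq, hqr, hrp⟩
    rw [unitSphere, mem_sphere_zero_iff_norm] at hp hq hr
    have hb : ∀ u v : EuclideanSpace ℝ (Fin 3), ‖u‖ = 1 → ‖v‖ = 1 →
        -1 ≤ ⟪u, v⟫ ∧ ⟪u, v⟫ ≤ 1 := by
      intro u v hu hv
      have := abs_real_inner_le_norm u v
      rw [hu, hv] at this
      constructor <;> [linarith [neg_abs_le (⟪u, v⟫ : ℝ)]; linarith [le_abs_self (⟪u, v⟫ : ℝ)]]
    have hcx : Real.cos x = ⟪p, q⟫ := by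
      rw [← hpq, sdist, Real.cos_arccos (hb p q hp hq).1 (hb p q hp hq).2]
    have hcy : Real.cos y = ⟪q, r⟫ := by
      rw [← hqr, sdist, Real.cos_arccos (hb q r hq hr).1 (hb q r hq hr).2]
    have hcz : Real.cos z = ⟪r, p⟫ := by
      rw [← hrp, sdist, Real.cos_arccos (hb r p hr hp).1 (hb r p hr hp).2]
    have key := gram hp hq hr
    rw [← hcx, ← hcy, ← hcz] at key
    have hsx : Real.sin x ^ 2 = 1 - Real.cos x ^ 2 := Real.sin_sq x
    have hsy : Real.sin y ^ 2 = 1 - Real.cos y ^ 2 := Real.sin_sq y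
    have hsx0 : 0 ≤ Real.sin x := Real.sin_nonneg_of_nonneg_of_le_pi hx.le hx'
    have hsy0 : 0 ≤ Real.sin y := Real.sin_nonneg_of_nonneg_of_le_pi hy.le hy'
    have hup : Real.cos z ≤ Real.cos (x - y) := by
      rw [Real.cos_sub]
      nlinarith [key, mul_nonneg hsx0 hsy0]
    have hlo : Real.cos (x + y) ≤ Real.cos z := by
      rw [Real.cos_add]
      nlinarith [key, mul_nonneg hsx0 hsy0]
    obtain ⟨ha, hb'⟩ := aux1' hx.le hy.le hz.le hx' hy' hz' hlo
    obtain ⟨hc, hd⟩ := aux2' hz.le hz' (abs_le.2 ⟨by linarith, by linarith⟩) hup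
    exact ⟨by linarith, by linarith, by linarith, by linarith⟩
  · rintro ⟨h1, h2, h3, h4⟩
    set D := Real.sin x * Real.sin z with hD
    have hsx0 : 0 ≤ Real.sin x := Real.sin_nonneg_of_nonneg_of_le_pi hx.le hx'
    have hsz0 : 0 ≤ Real.sin z := Real.sin_nonneg_of_nonneg_of_le_pi hz.le hz'
    have hD0 : 0 ≤ D := mul_nonneg hsx0 hsz0
    have hup : Real.cos y ≤ Real.cos (x - z) := aux2 hy' (by linarith) (by linarith)
    have hlo : Real.cos (x + z) ≤ Real.cos y := aux1 hy.le (by linarith) (by linarith)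
    rw [Real.cos_sub] at hup
    rw [Real.cos_add] at hlo
    have habs : |Real.cos y - Real.cos x * Real.cos z| ≤ D :=
      abs_le.2 ⟨by rw [hD]; linarith, by rw [hD]; linarith⟩
    set t := (Real.cos y - Real.cos x * Real.cos z) / D with htdef
    have ht : D * t = Real.cos y - Real.cos x * Real.cos z := by
      rcases eq_or_ne D 0 with h0 | h0
      · have : Real.cos y - Real.cos x * Real.cos z = 0 := by
          have := habs; rw [h0] at this
          exact abs_eq_zero.1 (le_antisymm this (abs_nonneg _))
        rw [this, htdef, this, h0]; ring
      · rw [htdef, mul_div_cancel₀ _ h0]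
    have ht1 : t ^ 2 ≤ 1 := by
      rcases eq_or_ne D 0 with h0 | h0
      · rw [htdef, h0, div_zero]; norm_num
      · have hDpos : 0 < D := lt_of_le_of_ne hD0 (Ne.symm h0)
        have : |t| ≤ 1 := by
          rw [htdef, abs_div, abs_of_pos hDpos]
          exact div_le_one_of_le₀ habs hD0
        calc t ^ 2 = |t| ^ 2 := (sq_abs t).symm
          _ ≤ 1 := pow_le_one₀ (abs_nonneg t) this
    set s := Real.sqrt (1 - t ^ 2) with hsdef
    have hs : s ^ 2 = 1 - t ^ 2 := Real.sq_sqrt (by linarith)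
    refine ⟨(WithLp.equiv 2 (Fin 3 → ℝ)).symm ![1, 0, 0],
      (WithLp.equiv 2 (Fin 3 → ℝ)).symm ![Real.cos x, Real.sin x, 0],
      (WithLp.equiv 2 (Fin 3 → ℝ)).symm ![Real.cos z, Real.sin z * t, Real.sin z * s],
      ?_, ?_, ?_, ?_, ?_, ?_⟩
    · rw [unitSphere, mem_sphere_zero_iff_norm, EuclideanSpace.norm_eq]
      simp [WithLp.equiv_symm_apply, WithLp.ofLp_toLp, Fin.sum_univ_three]
    · rw [unitSphere, mem_sphere_zero_iff_norm, EuclideanSpace.norm_eq]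
      simp only [WithLp.equiv_symm_apply, WithLp.ofLp_toLp, Fin.sum_univ_three, Matrix.cons_val_zero, Matrix.cons_val_one, Matrix.head_cons,
        Matrix.cons_val_two, Matrix.tail_cons, Real.norm_eq_abs, sq_abs]
      rw [show Real.cos x ^ 2 + Real.sin x ^ 2 + (0:ℝ) ^ 2 = 1 by
        rw [Real.cos_sq_add_sin_sq]; ring]
      exact Real.sqrt_one
    · rw [unitSphere, mem_sphere_zero_iff_norm, EuclideanSpace.norm_eq]
      simp only [WithLp.equiv_symm_apply, WithLp.ofLp_toLp, Fin.sum_univ_three, Matrix.cons_val_zero, Matrix.cons_val_one, Matrix.head_cons,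
        Matrix.cons_val_two, Matrix.tail_cons, Real.norm_eq_abs, sq_abs]
      rw [show Real.cos z ^ 2 + (Real.sin z * t) ^ 2 + (Real.sin z * s) ^ 2 = 1 by
        have := Real.cos_sq_add_sin_sq z
        nlinarith [hs]]
      exact Real.sqrt_one
    · rw [sdist, PiLp.inner_apply]
      simp only [WithLp.equiv_symm_apply, WithLp.ofLp_toLp, Fin.sum_univ_three, Matrix.cons_val_zero, Matrix.cons_val_one, Matrix.head_cons,
        Matrix.cons_val_two, Matrix.tail_cons, RCLike.inner_apply, conj_trivial]
      rw [show Real.cos x * (1:ℝ) + Real.sin x * 0 + 0 * 0 = Real.cos x by ring]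
      exact Real.arccos_cos hx.le hx'
    · rw [sdist, PiLp.inner_apply]
      simp only [WithLp.equiv_symm_apply, WithLp.ofLp_toLp, Fin.sum_univ_three, Matrix.cons_val_zero, Matrix.cons_val_one, Matrix.head_cons,
        Matrix.cons_val_two, Matrix.tail_cons, RCLike.inner_apply, conj_trivial]
      rw [show Real.cos z * Real.cos x + Real.sin z * t * Real.sin x + Real.sin z * s * 0
          = Real.cos y by rw [hD] at ht; linear_combination ht]
      exact Real.arccos_cos hy.le hy'
    · rw [sdist, PiLp.inner_apply]
      simp only [WithLp.equiv_symm_apply, WithLp.ofLp_toLp, Fin.sum_univ_three, Matrix.cons_val_zero, Matrix.cons_val_one, Matrix.head_cons,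
        Matrix.cons_val_two, Matrix.tail_cons, RCLike.inner_apply, conj_trivial]
      rw [show (1:ℝ) * Real.cos z + 0 * (Real.sin z * t) + 0 * (Real.sin z * s) = Real.cos z by ring]
      exact Real.arccos_cos hz.le hz'
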